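/- In the Diestel–Leader graph DL(2,2), for each k ≥ 1 there is a finite minimal edge cutset C_k separating a fixed vertex from infinity which is not (k−1)-close: C_k is the disjoint union of two nonempty edge sets A_k and B_k with dist(A_k, B_k) ≥ k. Consequently C_{DL(2,2)} = ∞. -/

import Mathlib

/-- `f` is an infinite (injective) ray. -/
def IsRay {W : Type*} (G : SimpleGraph W) (f : ℕ → W) : Prop :=
  Function.Injective f ∧ ∀ n, G.Adj (f n) (f (n + 1))

/-- The edge set `P` separates the vertex `o` from infinity. -/
def SepInf {W : Type*} (G : SimpleGraph W) (o : W) (P : Set (Sym2 W)) : Prop :=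
  ∀ f : ℕ → W, IsRay G f → f 0 = o → ∃ n, s(f n, f (n + 1)) ∈ P

/-- The Diestel–Leader graph (horocyclic product) of two trees `T`, `T'` with level
functions `ℓ`, `ℓ'`: vertices are pairs at equal levels, adjacent iff both
coordinates are adjacent. -/
def DLGraph {V V' : Type*} (T : SimpleGraph V) (T' : SimpleGraph V')
    (ℓ : V → ℤ) (ℓ' : V' → ℤ) : SimpleGraph {p : V × V' // ℓ p.1 = ℓ' p.2} :=
  SimpleGraph.fromRel fun p q => T.Adj p.1.1 q.1.1 ∧ T'.Adj p.1.2 q.1.2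

namespace DLAux

structure Ctx (V V' : Type*) where
  T : SimpleGraph V
  T' : SimpleGraph V'
  lv : V → ℤ
  lv' : V' → ℤ
  hlev : ∀ u v : V, T.Adj u v → lv v = lv u + 1 ∨ lv v = lv u - 1
  hlev' : ∀ u v : V', T'.Adj u v → lv' v = lv' u + 1 ∨ lv' v = lv' u - 1
  hdown : ∀ v : V, {w : V | T.Adj v w ∧ lv w = lv v + 1}.ncard = 2
  hup : ∀ v : V, {w : V | T.Adj v w ∧ lv w = lv v - 1}.ncard = 1
  hdown' : ∀ v : V', {w : V' | T'.Adj v w ∧ lv' w = lv' v - 1}.ncard = 2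
  hup' : ∀ v : V', {w : V' | T'.Adj v w ∧ lv' w = lv' v + 1}.ncard = 1

variable {V V' : Type*} (c : Ctx V V')

noncomputable def Ctx.par (v : V) : V :=
  (Set.nonempty_of_ncard_ne_zero (s := {w : V | c.T.Adj v w ∧ c.lv w = c.lv v - 1})
    (by rw [c.hup v]; exact one_ne_zero)).choose

lemma Ctx.par_spec (v : V) : c.T.Adj v (c.par v) ∧ c.lv (c.par v) = c.lv v - 1 :=
  (Set.nonempty_of_ncard_ne_zero (s := {w : V | c.T.Adj v w ∧ c.lv w = c.lv v - 1})
    (by rw [c.hup v]; exact one_ne_zero)).choose_spec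

noncomputable def Ctx.chd (v : V) : V :=
  (Set.nonempty_of_ncard_ne_zero (s := {w : V | c.T.Adj v w ∧ c.lv w = c.lv v + 1})
    (by rw [c.hdown v]; exact two_ne_zero)).choose

lemma Ctx.chd_spec (v : V) : c.T.Adj v (c.chd v) ∧ c.lv (c.chd v) = c.lv v + 1 :=
  (Set.nonempty_of_ncard_ne_zero (s := {w : V | c.T.Adj v w ∧ c.lv w = c.lv v + 1})
    (by rw [c.hdown v]; exact two_ne_zero)).choose_spec

noncomputable def Ctx.par' (v : V') : V' :=
  (Set.nonempty_of_ncard_ne_zero (s := {w : V' | c.T'.Adj v w ∧ c.lv' w = c.lv' v + 1})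
    (by rw [c.hup' v]; exact one_ne_zero)).choose

lemma Ctx.par'_spec (v : V') : c.T'.Adj v (c.par' v) ∧ c.lv' (c.par' v) = c.lv' v + 1 :=
  (Set.nonempty_of_ncard_ne_zero (s := {w : V' | c.T'.Adj v w ∧ c.lv' w = c.lv' v + 1})
    (by rw [c.hup' v]; exact one_ne_zero)).choose_spec

noncomputable def Ctx.chd' (v : V') : V' :=
  (Set.nonempty_of_ncard_ne_zero (s := {w : V' | c.T'.Adj v w ∧ c.lv' w = c.lv' v - 1})
    (by rw [c.hdown' v]; exact two_ne_zero)).choose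

lemma Ctx.chd'_spec (v : V') : c.T'.Adj v (c.chd' v) ∧ c.lv' (c.chd' v) = c.lv' v - 1 :=
  (Set.nonempty_of_ncard_ne_zero (s := {w : V' | c.T'.Adj v w ∧ c.lv' w = c.lv' v - 1})
    (by rw [c.hdown' v]; exact two_ne_zero)).choose_spec

/-- uniqueness of the lower neighbour in `T`. -/
lemma Ctx.eq_par {v w : V} (h : c.T.Adj v w) (hl : c.lv w = c.lv v - 1) : w = c.par v := by
  obtain ⟨z, hz⟩ := Set.ncard_eq_one.mp (c.hup v)
  have h1 : w ∈ {w : V | c.T.Adj v w ∧ c.lv w = c.lv v - 1} := ⟨h, hl⟩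
  have h2 : c.par v ∈ {w : V | c.T.Adj v w ∧ c.lv w = c.lv v - 1} := c.par_spec v
  rw [hz] at h1 h2
  rw [h1, h2]

/-- uniqueness of the upper neighbour in `T'`. -/
lemma Ctx.eq_par' {v w : V'} (h : c.T'.Adj v w) (hl : c.lv' w = c.lv' v + 1) : w = c.par' v := by
  obtain ⟨z, hz⟩ := Set.ncard_eq_one.mp (c.hup' v)
  have h1 : w ∈ {w : V' | c.T'.Adj v w ∧ c.lv' w = c.lv' v + 1} := ⟨h, hl⟩
  have h2 : c.par' v ∈ {w : V' | c.T'.Adj v w ∧ c.lv' w = c.lv' v + 1} := c.par'_spec v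
  rw [hz] at h1 h2
  rw [h1, h2]

lemma Ctx.par_chd (v : V) : c.par (c.chd v) = v :=
  (c.eq_par ((c.chd_spec v).1.symm) (by rw [(c.chd_spec v).2]; ring)).symm

lemma Ctx.par'_chd' (v : V') : c.par' (c.chd' v) = v :=
  (c.eq_par' ((c.chd'_spec v).1.symm) (by rw [(c.chd'_spec v).2]; ring)).symm

lemma Ctx.lv_par_iter (v : V) (n : ℕ) : c.lv (c.par^[n] v) = c.lv v - n := by
  induction n with
  | zero => simp
  | succ n ih =>
    rw [Function.iterate_succ_apply', (c.par_spec _).2, ih]; push_cast; ring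

lemma Ctx.lv_chd_iter (v : V) (n : ℕ) : c.lv (c.chd^[n] v) = c.lv v + n := by
  induction n with
  | zero => simp
  | succ n ih =>
    rw [Function.iterate_succ_apply', (c.chd_spec _).2, ih]; push_cast; ring

lemma Ctx.lv'_par'_iter (v : V') (n : ℕ) : c.lv' (c.par'^[n] v) = c.lv' v + n := by
  induction n with
  | zero => simp
  | succ n ih =>
    rw [Function.iterate_succ_apply', (c.par'_spec _).2, ih]; push_cast; ring

lemma Ctx.lv'_chd'_iter (v : V') (n : ℕ) : c.lv' (c.chd'^[n] v) = c.lv' v - n := by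
  induction n with
  | zero => simp
  | succ n ih =>
    rw [Function.iterate_succ_apply', (c.chd'_spec _).2, ih]; push_cast; ring

lemma Ctx.par_chd_iter (v : V) (n : ℕ) : c.par^[n] (c.chd^[n] v) = v := by
  induction n with
  | zero => simp
  | succ n ih =>
    rw [Function.iterate_succ_apply' (c.chd), Function.iterate_succ_apply (c.par),
      c.par_chd, ih]

lemma Ctx.par'_chd'_iter (v : V') (n : ℕ) : c.par'^[n] (c.chd'^[n] v) = v := by
  induction n with
  | zero => simp
  | succ n ih =>
    rw [Function.iterate_succ_apply' (c.chd'), Function.iterate_succ_apply (c.par'),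
      c.par'_chd', ih]

abbrev DV (c : Ctx V V') := {p : V × V' // c.lv p.1 = c.lv' p.2}

abbrev Gr (c : Ctx V V') : SimpleGraph (DV c) := DLGraph c.T c.T' c.lv c.lv'

def lvl (p : DV c) : ℤ := c.lv p.1.1

lemma adj_iff {p q : DV c} :
    (Gr c).Adj p q ↔ p ≠ q ∧ c.T.Adj p.1.1 q.1.1 ∧ c.T'.Adj p.1.2 q.1.2 := by
  unfold Gr DLGraph
  rw [SimpleGraph.fromRel_adj]
  constructor
  · rintro ⟨h, h1 | h1⟩
    · exact ⟨h, h1⟩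
    · exact ⟨h, h1.1.symm, h1.2.symm⟩
  · rintro ⟨h, h1⟩
    exact ⟨h, Or.inl h1⟩

lemma adj_mk {x y : V} {x' y' : V'} (h : c.lv x = c.lv' x') (h' : c.lv y = c.lv' y')
    (ha : c.T.Adj x y) (ha' : c.T'.Adj x' y') :
    (Gr c).Adj ⟨(x, x'), h⟩ ⟨(y, y'), h'⟩ := by
  rw [adj_iff]
  refine ⟨?_, ha, ha'⟩
  intro hh
  exact ha.ne (congrArg (fun p => p.1.1) hh)

lemma adj_lvl {p q : DV c} (h : (Gr c).Adj p q) :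
    lvl c q = lvl c p + 1 ∨ lvl c q = lvl c p - 1 :=
  c.hlev _ _ ((adj_iff c).mp h).2.1

lemma lvl_snd (p : DV c) : c.lv' p.1.2 = lvl c p := p.2.symm


section Cut

variable (o : DV c) (k : ℕ)

noncomputable def aa : V := c.par^[k] o.1.1
noncomputable def aa' : V' := c.par'^[k] o.1.2

def L0 : ℤ := c.lv o.1.1

lemma lv_aa : c.lv (aa c o k) = L0 c o - k := by
  rw [aa, c.lv_par_iter]; rfl

lemma lv'_aa' : c.lv' (aa' c o k) = L0 c o + k := by
  rw [aa', c.lv'_par'_iter, ← o.2]; rfl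

def under (x : V) : Prop := ∃ m : ℕ, c.par^[m] x = aa c o k

def under' (x' : V') : Prop := ∃ m : ℕ, c.par'^[m] x' = aa' c o k

lemma under_lv {x : V} (h : under c o k x) : L0 c o - k ≤ c.lv x := by
  obtain ⟨m, hm⟩ := h
  have h1 := c.lv_par_iter x m
  rw [hm, lv_aa] at h1
  have : (0:ℤ) ≤ m := Int.natCast_nonneg m
  omega

lemma under'_lv {x' : V'} (h : under' c o k x') : c.lv' x' ≤ L0 c o + k := by
  obtain ⟨m, hm⟩ := h
  have h1 := c.lv'_par'_iter x' m
  rw [hm, lv'_aa'] at h1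
  have : (0:ℤ) ≤ m := Int.natCast_nonneg m
  omega

def FF : Set (DV c) := {p | under c o k p.1.1 ∧ under' c o k p.1.2}

lemma o_mem_FF : o ∈ FF c o k := ⟨⟨k, rfl⟩, ⟨k, rfl⟩⟩

lemma lvl_of_mem_FF {p : DV c} (hp : p ∈ FF c o k) :
    L0 c o - k ≤ lvl c p ∧ lvl c p ≤ L0 c o + k := by
  refine ⟨under_lv c o k hp.1, ?_⟩
  have := under'_lv c o k hp.2
  rw [lvl_snd] at this
  exact this

/-- the bottom part of the cutset. -/
def SA : Set (Sym2 (DV c)) :=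
  {e | ∃ p q : DV c, e = s(p, q) ∧ (Gr c).Adj p q ∧ p.1.1 = aa c o k ∧
    under' c o k p.1.2 ∧ q.1.1 = c.par (aa c o k)}

/-- the top part of the cutset. -/
def SB : Set (Sym2 (DV c)) :=
  {e | ∃ p q : DV c, e = s(p, q) ∧ (Gr c).Adj p q ∧ p.1.2 = aa' c o k ∧
    under c o k p.1.1 ∧ q.1.2 = c.par' (aa' c o k)}

lemma SA_lvl {e : Sym2 (DV c)} (he : e ∈ SA c o k) :
    ∃ p q : DV c, e = s(p, q) ∧ lvl c p = L0 c o - k ∧ lvl c q = L0 c o - k - 1 := by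
  obtain ⟨p, q, rfl, hadj, hp1, hp2, hq1⟩ := he
  refine ⟨p, q, rfl, ?_, ?_⟩
  · rw [lvl, hp1, lv_aa]
  · rw [lvl, hq1, (c.par_spec _).2, lv_aa]

lemma SB_lvl {e : Sym2 (DV c)} (he : e ∈ SB c o k) :
    ∃ p q : DV c, e = s(p, q) ∧ lvl c p = L0 c o + k ∧ lvl c q = L0 c o + k + 1 := by
  obtain ⟨p, q, rfl, hadj, hp2, hp1, hq2⟩ := he
  refine ⟨p, q, rfl, ?_, ?_⟩
  · rw [← lvl_snd, hp2, lv'_aa']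
  · rw [← lvl_snd, hq2, (c.par'_spec _).2, lv'_aa']

/-- the exit lemma : an edge leaving `FF` is in `SA ∪ SB`. -/
lemma exit_mem {p q : DV c} (hp : p ∈ FF c o k) (hq : q ∉ FF c o k)
    (hadj : (Gr c).Adj p q) : s(p, q) ∈ SA c o k ∪ SB c o k := by
  obtain ⟨hx, hx'⟩ := hp
  obtain ⟨-, hT, hT'⟩ := (adj_iff c).mp hadj
  rcases c.hlev _ _ hT with h1 | h1
  · -- level goes up by one
    have hy : under c o k q.1.1 := by
      obtain ⟨m, hm⟩ := hx
      have hpar : p.1.1 = c.par q.1.1 := c.eq_par hT.symm (by omega)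
      exact ⟨m + 1, by rw [Function.iterate_succ_apply, ← hpar, hm]⟩
    have h1' : c.lv' q.1.2 = c.lv' p.1.2 + 1 := by
      rw [← q.2, ← p.2]; exact h1
    have hy' : q.1.2 = c.par' p.1.2 := c.eq_par' hT' h1'
    obtain ⟨m, hm⟩ := hx'
    cases m with
    | zero =>
      right
      rw [Function.iterate_zero_apply] at hm
      exact ⟨p, q, rfl, hadj, hm, hx, by rw [hy', hm]⟩
    | succ m =>
      exact absurd ⟨hy, ⟨m, by rw [hy', ← Function.iterate_succ_apply, hm]⟩⟩ hq
  · -- level goes down by one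
    have hy' : under' c o k q.1.2 := by
      obtain ⟨m, hm⟩ := hx'
      have h1' : c.lv' p.1.2 = c.lv' q.1.2 + 1 := by
        rw [← q.2, ← p.2]; omega
      have hpar : p.1.2 = c.par' q.1.2 := c.eq_par' hT'.symm h1'
      exact ⟨m + 1, by rw [Function.iterate_succ_apply, ← hpar, hm]⟩
    have hy : q.1.1 = c.par p.1.1 := c.eq_par hT h1
    obtain ⟨m, hm⟩ := hx
    cases m with
    | zero =>
      left
      rw [Function.iterate_zero_apply] at hm
      exact ⟨p, q, rfl, hadj, hm, hx', by rw [hy, hm]⟩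
    | succ m =>
      exact absurd ⟨⟨m, by rw [hy, ← Function.iterate_succ_apply, hm]⟩, hy'⟩ hq

lemma Dm_finite (n : ℕ) : {x : V | c.par^[n] x = aa c o k}.Finite := by
  induction n with
  | zero =>
    have : {x : V | c.par^[0] x = aa c o k} ⊆ {aa c o k} := by
      intro x hx; simpa using hx
    exact Set.Finite.subset (Set.finite_singleton _) this
  | succ n ih =>
    have hsub : {x : V | c.par^[n+1] x = aa c o k} ⊆
        ⋃ z ∈ {x : V | c.par^[n] x = aa c o k},
          {w : V | c.T.Adj z w ∧ c.lv w = c.lv z + 1} := by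
      intro x hx
      refine Set.mem_biUnion (show c.par^[n] (c.par x) = aa c o k from hx) ?_
      exact ⟨(c.par_spec x).1.symm, by have := (c.par_spec x).2; omega⟩
    exact Set.Finite.subset
      (Set.Finite.biUnion ih (fun z _ =>
        Set.finite_of_ncard_ne_zero (by rw [c.hdown z]; exact two_ne_zero)))
      hsub

lemma Dm'_finite (n : ℕ) : {x : V' | c.par'^[n] x = aa' c o k}.Finite := by
  induction n with
  | zero =>
    have : {x : V' | c.par'^[0] x = aa' c o k} ⊆ {aa' c o k} := by
      intro x hx; simpa using hx
    exact Set.Finite.subset (Set.finite_singleton _) this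
  | succ n ih =>
    have hsub : {x : V' | c.par'^[n+1] x = aa' c o k} ⊆
        ⋃ z ∈ {x : V' | c.par'^[n] x = aa' c o k},
          {w : V' | c.T'.Adj z w ∧ c.lv' w = c.lv' z - 1} := by
      intro x hx
      refine Set.mem_biUnion (show c.par'^[n] (c.par' x) = aa' c o k from hx) ?_
      exact ⟨(c.par'_spec x).1.symm, by have := (c.par'_spec x).2; omega⟩
    exact Set.Finite.subset
      (Set.Finite.biUnion ih (fun z _ =>
        Set.finite_of_ncard_ne_zero (by rw [c.hdown' z]; exact two_ne_zero)))
      hsub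

lemma FF_finite : (FF c o k).Finite := by
  have hsub : FF c o k ⊆ Subtype.val ⁻¹'
      ((⋃ m ∈ Set.Iic (2*k), {x : V | c.par^[m] x = aa c o k}) ×ˢ
       (⋃ m ∈ Set.Iic (2*k), {x : V' | c.par'^[m] x = aa' c o k})) := by
    rintro p ⟨⟨m, hm⟩, ⟨m', hm'⟩⟩
    have h1 := c.lv_par_iter p.1.1 m
    rw [hm, lv_aa] at h1
    have h2 := c.lv'_par'_iter p.1.2 m'
    rw [hm', lv'_aa'] at h2
    have h3 : c.lv p.1.1 = c.lv' p.1.2 := p.2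
    have hmle : m ≤ 2*k := by omega
    have hmle' : m' ≤ 2*k := by omega
    exact ⟨Set.mem_biUnion hmle hm, Set.mem_biUnion hmle' hm'⟩
  refine Set.Finite.preimage Subtype.val_injective.injOn ?_ |>.subset hsub
  exact Set.Finite.prod
    ((Set.finite_Iic (2*k)).biUnion (fun m _ => Dm_finite c o k m))
    ((Set.finite_Iic (2*k)).biUnion (fun m _ => Dm'_finite c o k m))

lemma nbhd_finite (p : DV c) : {q : DV c | (Gr c).Adj p q}.Finite := by
  have hsub : {q : DV c | (Gr c).Adj p q} ⊆ Subtype.val ⁻¹'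
      (({w : V | c.T.Adj p.1.1 w ∧ c.lv w = c.lv p.1.1 + 1} ∪
        {w : V | c.T.Adj p.1.1 w ∧ c.lv w = c.lv p.1.1 - 1}) ×ˢ
       ({w : V' | c.T'.Adj p.1.2 w ∧ c.lv' w = c.lv' p.1.2 + 1} ∪
        {w : V' | c.T'.Adj p.1.2 w ∧ c.lv' w = c.lv' p.1.2 - 1})) := by
    intro q hq
    obtain ⟨-, hT, hT'⟩ := (adj_iff c).mp hq
    constructor
    · rcases c.hlev _ _ hT with h | h
      · exact Or.inl ⟨hT, h⟩
      · exact Or.inr ⟨hT, h⟩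
    · rcases c.hlev' _ _ hT' with h | h
      · exact Or.inl ⟨hT', h⟩
      · exact Or.inr ⟨hT', h⟩
  refine Set.Finite.preimage Subtype.val_injective.injOn ?_ |>.subset hsub
  refine Set.Finite.prod (Set.Finite.union ?_ ?_) (Set.Finite.union ?_ ?_)
  · exact Set.finite_of_ncard_ne_zero (by rw [c.hdown]; exact two_ne_zero)
  · exact Set.finite_of_ncard_ne_zero (by rw [c.hup]; exact one_ne_zero)
  · exact Set.finite_of_ncard_ne_zero (by rw [c.hup']; exact one_ne_zero)
  · exact Set.finite_of_ncard_ne_zero (by rw [c.hdown']; exact two_ne_zero)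

lemma SA_foot_mem {e : Sym2 (DV c)} (he : e ∈ SA c o k) :
    ∃ p q : DV c, e = s(p, q) ∧ p ∈ FF c o k ∧ (Gr c).Adj p q := by
  obtain ⟨p, q, rfl, hadj, hp1, hp2, hq1⟩ := he
  exact ⟨p, q, rfl, ⟨⟨0, by simpa using hp1⟩, hp2⟩, hadj⟩

lemma SB_foot_mem {e : Sym2 (DV c)} (he : e ∈ SB c o k) :
    ∃ p q : DV c, e = s(p, q) ∧ p ∈ FF c o k ∧ (Gr c).Adj p q := by
  obtain ⟨p, q, rfl, hadj, hp2, hp1, hq2⟩ := he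
  exact ⟨p, q, rfl, ⟨hp1, ⟨0, by simpa using hp2⟩⟩, hadj⟩

lemma C_finite : (SA c o k ∪ SB c o k).Finite := by
  have hsub : SA c o k ∪ SB c o k ⊆
      ⋃ p ∈ FF c o k, (fun q => s(p, q)) '' {q : DV c | (Gr c).Adj p q} := by
    rintro e (he | he)
    · obtain ⟨p, q, rfl, hp, hadj⟩ := SA_foot_mem c o k he
      exact Set.mem_biUnion hp ⟨q, hadj, rfl⟩
    · obtain ⟨p, q, rfl, hp, hadj⟩ := SB_foot_mem c o k he
      exact Set.mem_biUnion hp ⟨q, hadj, rfl⟩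
  exact Set.Finite.subset
    ((FF_finite c o k).biUnion (fun p _ => (nbhd_finite c p).image _)) hsub

lemma C_subset_edgeSet : SA c o k ∪ SB c o k ⊆ (Gr c).edgeSet := by
  rintro e (he | he)
  · obtain ⟨p, q, rfl, hadj, -⟩ := he
    exact hadj
  · obtain ⟨p, q, rfl, hadj, -⟩ := he
    exact hadj

lemma SA_nonempty (hk : 1 ≤ k) : (SA c o k).Nonempty := by
  set x' : V' := c.chd'^[k] o.1.2 with hx'
  have hlvx' : c.lv' x' = L0 c o - k := by
    rw [hx', c.lv'_chd'_iter, ← o.2]; rfl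
  have hux' : under' c o k x' := by
    refine ⟨2*k, ?_⟩
    rw [two_mul, Function.iterate_add_apply, hx', c.par'_chd'_iter, aa']
  have hla : c.lv (aa c o k) = c.lv' x' := by rw [lv_aa, hlvx']
  set p : DV c := ⟨(aa c o k, x'), hla⟩ with hp
  have hlq : c.lv (c.par (aa c o k)) = c.lv' (c.chd' x') := by
    rw [(c.par_spec _).2, (c.chd'_spec _).2, lv_aa, hlvx']
  set q : DV c := ⟨(c.par (aa c o k), c.chd' x'), hlq⟩ with hq
  refine ⟨s(p, q), p, q, rfl, ?_, rfl, hux', rfl⟩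
  exact adj_mk c _ _ (c.par_spec _).1 (c.chd'_spec _).1

lemma SB_nonempty (hk : 1 ≤ k) : (SB c o k).Nonempty := by
  set x : V := c.chd^[k] o.1.1 with hx
  have hlvx : c.lv x = L0 c o + k := by
    rw [hx, c.lv_chd_iter]; rfl
  have hux : under c o k x := by
    refine ⟨2*k, ?_⟩
    rw [two_mul, Function.iterate_add_apply, hx, c.par_chd_iter, aa]
  have hla : c.lv x = c.lv' (aa' c o k) := by rw [lv'_aa', hlvx]
  set p : DV c := ⟨(x, aa' c o k), hla⟩ with hp
  have hlq : c.lv (c.chd x) = c.lv' (c.par' (aa' c o k)) := by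
    rw [(c.chd_spec _).2, (c.par'_spec _).2, lv'_aa', hlvx]
  set q : DV c := ⟨(c.chd x, c.par' (aa' c o k)), hlq⟩ with hq
  refine ⟨s(p, q), p, q, rfl, ?_, rfl, hux, rfl⟩
  exact adj_mk c _ _ (c.chd_spec _).1 (c.par'_spec _).1

lemma SAB_disjoint (hk : 1 ≤ k) : Disjoint (SA c o k) (SB c o k) := by
  rw [Set.disjoint_left]
  intro e heA heB
  obtain ⟨p, q, he, hp, hq⟩ := SA_lvl c o k heA
  obtain ⟨p', q', he', hp', hq'⟩ := SB_lvl c o k heB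
  rw [he] at he'
  rcases Sym2.eq_iff.mp he' with ⟨h1, h2⟩ | ⟨h1, h2⟩
  · rw [← h1] at hp'; rw [hp] at hp'; omega
  · rw [← h2] at hp'; rw [hq] at hp'; omega

end Cut

lemma abs_lvl_le_length {u v : DV c} (W : (Gr c).Walk u v) :
    |lvl c u - lvl c v| ≤ (W.length : ℤ) := by
  induction W with
  | nil => simp
  | @cons u v w h W ih =>
    have h1 : |lvl c u - lvl c v| ≤ 1 := by
      rcases adj_lvl c h with h2 | h2 <;> rw [h2] <;> simp
    calc |lvl c u - lvl c w| ≤ |lvl c u - lvl c v| + |lvl c v - lvl c w| :=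
          abs_sub_le _ _ _
      _ ≤ 1 + W.length := add_le_add h1 ih
      _ = ((W.cons h).length : ℤ) := by rw [SimpleGraph.Walk.length_cons]; push_cast; ring

lemma lvl_diff_le_dist {u v : DV c} (h : (Gr c).Reachable u v) :
    |lvl c u - lvl c v| ≤ ((Gr c).dist u v : ℤ) := by
  obtain ⟨W, hW⟩ := h.exists_walk_length_eq_dist
  rw [← hW]
  exact abs_lvl_le_length c W

lemma reach_of_chain {f : ℕ → DV c} (hadj : ∀ n, (Gr c).Adj (f n) (f (n + 1))) (n : ℕ) :
    (Gr c).Reachable (f 0) (f n) := by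
  induction n with
  | zero => exact SimpleGraph.Reachable.refl _
  | succ n ih => exact ih.trans (hadj n).reachable

lemma adj_of_comp {p q : DV c} (h : c.T.Adj p.1.1 q.1.1) (h' : c.T'.Adj p.1.2 q.1.2) :
    (Gr c).Adj p q := by
  rw [adj_iff]
  exact ⟨fun hh => h.ne (congrArg (fun z : DV c => z.1.1) hh), h, h'⟩

section Rays

variable (o : DV c) (k : ℕ)

lemma rayA (hk : 1 ≤ k) {p q : DV c} (hadj : (Gr c).Adj p q)
    (hp1 : p.1.1 = aa c o k) (hp2 : under' c o k p.1.2)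
    (hq1 : q.1.1 = c.par (aa c o k)) :
    ∃ (f : ℕ → DV c) (N : ℕ), IsRay (Gr c) f ∧ f 0 = o ∧ f N = p ∧ f (N+1) = q ∧
      (∀ n, lvl c (f n) = L0 c o - k → n = N) ∧
      (∀ n, lvl c (f n) = L0 c o - k - 1 → n = N + 1) ∧
      (∀ n, lvl c (f n) ≠ L0 c o + k + 1) := by
  have hL : L0 c o = c.lv o.1.1 := rfl
  have hlvx' : c.lv' p.1.2 = L0 c o - k := by rw [← p.2, hp1, lv_aa]
  have h2k : c.par'^[2*k] p.1.2 = aa' c o k := by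
    obtain ⟨m, hm⟩ := hp2
    have h1 := c.lv'_par'_iter p.1.2 m
    rw [hm, lv'_aa', hlvx'] at h1
    have hm2 : m = 2*k := by omega
    rw [← hm2]; exact hm
  have hT'xy : c.T'.Adj p.1.2 q.1.2 := ((adj_iff c).mp hadj).2.2
  have hlvy' : c.lv' q.1.2 = L0 c o - k - 1 := by
    rw [← q.2, hq1, (c.par_spec _).2, lv_aa]
  -- the meet index
  set P : ℕ → Prop := fun i => c.par'^[i] o.1.2 = c.par'^[k+i] p.1.2 with hP
  have hPd : DecidablePred P := fun _ => Classical.dec _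
  have hex : ∃ i, P i := ⟨k, by
    show c.par'^[k] o.1.2 = c.par'^[k+k] p.1.2
    rw [show k + k = 2*k by ring, h2k]; rfl⟩
  set i := Nat.find hex with hidef
  have hPi : P i := Nat.find_spec hex
  have hik : i ≤ k := Nat.find_min' hex (by
    show c.par'^[k] o.1.2 = c.par'^[k+k] p.1.2
    rw [show k + k = 2*k by ring, h2k]; rfl)
  have hmin : ∀ m, m < i → ¬ P m := fun m hm => Nat.find_min hex hm
  set N := 2*i + k with hN
  -- the ray
  set f : ℕ → DV c := fun n =>
    if h1 : n ≤ i then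
      ⟨(c.chd^[n] o.1.1, c.par'^[n] o.1.2), by
        rw [c.lv_chd_iter, c.lv'_par'_iter, o.2]⟩
    else if h2 : n ≤ N then
      ⟨(c.par^[n-i] (c.chd^[i] o.1.1), c.par'^[N-n] p.1.2), by
        dsimp only
        have e1 := c.lv_par_iter (c.chd^[i] o.1.1) (n-i)
        have e2 := c.lv_chd_iter o.1.1 i
        have e3 := c.lv'_par'_iter p.1.2 (N-n)
        omega⟩
    else
      ⟨(c.par^[n-i] (c.chd^[i] o.1.1), c.chd'^[n-(N+1)] q.1.2), by
        dsimp only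
        have e1 := c.lv_par_iter (c.chd^[i] o.1.1) (n-i)
        have e2 := c.lv_chd_iter o.1.1 i
        have e3 := c.lv'_chd'_iter q.1.2 (n-(N+1))
        omega⟩
    with hf
  have hfa : ∀ n, n ≤ i →
      (f n).1.1 = c.chd^[n] o.1.1 ∧ (f n).1.2 = c.par'^[n] o.1.2 := by
    intro n h
    simp only [hf, dif_pos h]
    exact ⟨trivial, trivial⟩
  have hfb : ∀ n, i < n → n ≤ N →
      (f n).1.1 = c.par^[n-i] (c.chd^[i] o.1.1) ∧ (f n).1.2 = c.par'^[N-n] p.1.2 := by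
    intro n h h2
    simp only [hf, dif_neg (by omega : ¬ n ≤ i), dif_pos h2]
    exact ⟨trivial, trivial⟩
  have hfc : ∀ n, N < n →
      (f n).1.1 = c.par^[n-i] (c.chd^[i] o.1.1) ∧ (f n).1.2 = c.chd'^[n-(N+1)] q.1.2 := by
    intro n h
    simp only [hf, dif_neg (by omega : ¬ n ≤ i), dif_neg (by omega : ¬ n ≤ N)]
    exact ⟨trivial, trivial⟩
  have hfirst : ∀ n, i < n → (f n).1.1 = c.par^[n-i] (c.chd^[i] o.1.1) := by
    intro n h
    by_cases h2 : n ≤ N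
    · exact (hfb n h h2).1
    · exact (hfc n (by omega)).1
  have hlvl : ∀ n, lvl c (f n) = if n ≤ i then L0 c o + n else L0 c o + 2*i - n := by
    intro n
    by_cases h : n ≤ i
    · rw [if_pos h]
      show c.lv (f n).1.1 = _
      rw [(hfa n h).1, c.lv_chd_iter, hL]
    · rw [if_neg h]
      show c.lv (f n).1.1 = _
      rw [hfirst n (by omega), c.lv_par_iter, c.lv_chd_iter]
      omega
  -- the key identified vertices
  have hfN : f N = p := by
    obtain ⟨e1, e2⟩ := hfb N (by omega) le_rfl
    apply Subtype.ext
    apply Prod.ext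
    · rw [e1, show N - i = k + i by omega, Function.iterate_add_apply,
        c.par_chd_iter]
      exact hp1.symm
    · rw [e2, Nat.sub_self, Function.iterate_zero_apply]
  have hfN1 : f (N+1) = q := by
    obtain ⟨e1, e2⟩ := hfc (N+1) (by omega)
    apply Subtype.ext
    apply Prod.ext
    · rw [e1, show N + 1 - i = 1 + (k + i) by omega, Function.iterate_add_apply,
        Function.iterate_add_apply, c.par_chd_iter, Function.iterate_one]
      exact hq1.symm
    · rw [e2, Nat.sub_self, Function.iterate_zero_apply]
  -- adjacency
  have hstep : ∀ n, (Gr c).Adj (f n) (f (n + 1)) := by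
    intro n
    by_cases hn1 : n + 1 ≤ i
    · obtain ⟨a1, a2⟩ := hfa n (by omega)
      obtain ⟨b1, b2⟩ := hfa (n+1) hn1
      apply adj_of_comp
      · rw [a1, b1, Function.iterate_succ_apply']
        exact (c.chd_spec _).1
      · rw [a2, b2, Function.iterate_succ_apply']
        exact (c.par'_spec _).1
    · by_cases hn2 : n + 1 ≤ N
      · by_cases hn3 : n ≤ i
        · -- n = i
          have hni : n = i := by omega
          obtain ⟨a1, a2⟩ := hfa n hn3
          obtain ⟨b1, b2⟩ := hfb (n+1) (by omega) hn2
          apply adj_of_comp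
          · rw [a1, b1, hni, show i + 1 - i = 1 by omega, Function.iterate_one]
            exact (c.par_spec _).1
          · rw [a2, b2, hni, hPi, show k + i = (N - (i+1)) + 1 by omega,
              Function.iterate_succ_apply']
            exact ((c.par'_spec _).1).symm
        · obtain ⟨a1, a2⟩ := hfb n (by omega) (by omega)
          obtain ⟨b1, b2⟩ := hfb (n+1) (by omega) hn2
          apply adj_of_comp
          · rw [a1, b1, show n + 1 - i = (n - i) + 1 by omega,
              Function.iterate_succ_apply']
            exact (c.par_spec _).1
          · rw [a2, b2, show N - n = (N - (n+1)) + 1 by omega,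
              Function.iterate_succ_apply']
            exact ((c.par'_spec _).1).symm
      · by_cases hn3 : n ≤ N
        · -- n = N
          have hnN : n = N := by omega
          rw [hnN, hfN, hfN1]
          exact hadj
        · obtain ⟨a1, a2⟩ := hfc n (by omega)
          obtain ⟨b1, b2⟩ := hfc (n+1) (by omega)
          apply adj_of_comp
          · rw [a1, b1, show n + 1 - i = (n - i) + 1 by omega,
              Function.iterate_succ_apply']
            exact (c.par_spec _).1
          · rw [a2, b2, show n + 1 - (N+1) = (n - (N+1)) + 1 by omega,
              Function.iterate_succ_apply']
            exact (c.chd'_spec _).1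
  -- injectivity
  have hinj : Function.Injective f := by
    intro m n hmn
    have hl := congrArg (lvl c) hmn
    rw [hlvl m, hlvl n] at hl
    by_cases hm : m ≤ i <;> by_cases hn : n ≤ i
    · rw [if_pos hm, if_pos hn] at hl; omega
    · rw [if_pos hm, if_neg hn] at hl
      exfalso
      have hmn2 : (m:ℤ) + n = 2*i := by omega
      have hmlt : m < i := by omega
      have hc := congrArg (fun z : DV c => z.1.2) hmn
      rw [(hfa m hm).2, (hfb n (by omega) (by omega)).2,
        show N - n = k + m by omega] at hc
      exact hmin m hmlt hc
    · rw [if_neg hm, if_pos hn] at hl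
      exfalso
      have hmn2 : (m:ℤ) + n = 2*i := by omega
      have hnlt : n < i := by omega
      have hc := congrArg (fun z : DV c => z.1.2) hmn
      rw [(hfa n hn).2, (hfb m (by omega) (by omega)).2,
        show N - m = k + n by omega] at hc
      exact hmin n hnlt hc.symm
    · rw [if_neg hm, if_neg hn] at hl; omega
  refine ⟨f, N, ⟨hinj, hstep⟩, ?_, hfN, hfN1, ?_, ?_, ?_⟩
  · apply Subtype.ext
    apply Prod.ext
    · rw [(hfa 0 (by omega)).1, Function.iterate_zero_apply]
    · rw [(hfa 0 (by omega)).2, Function.iterate_zero_apply]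
  · intro n h
    rw [hlvl n] at h
    by_cases hn : n ≤ i
    · rw [if_pos hn] at h; omega
    · rw [if_neg hn] at h; omega
  · intro n h
    rw [hlvl n] at h
    by_cases hn : n ≤ i
    · rw [if_pos hn] at h; omega
    · rw [if_neg hn] at h; omega
  · intro n h
    rw [hlvl n] at h
    by_cases hn : n ≤ i
    · rw [if_pos hn] at h; omega
    · rw [if_neg hn] at h; omega

lemma rayB (hk : 1 ≤ k) {p q : DV c} (hadj : (Gr c).Adj p q)
    (hp2 : p.1.2 = aa' c o k) (hp1 : under c o k p.1.1)
    (hq2 : q.1.2 = c.par' (aa' c o k)) :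
    ∃ (f : ℕ → DV c) (N : ℕ), IsRay (Gr c) f ∧ f 0 = o ∧ f N = p ∧ f (N+1) = q ∧
      (∀ n, lvl c (f n) = L0 c o + k → n = N) ∧
      (∀ n, lvl c (f n) = L0 c o + k + 1 → n = N + 1) ∧
      (∀ n, lvl c (f n) ≠ L0 c o - k - 1) := by
  have hL : L0 c o = c.lv o.1.1 := rfl
  have hlvx : c.lv p.1.1 = L0 c o + k := by rw [p.2, hp2, lv'_aa']
  have h2k : c.par^[2*k] p.1.1 = aa c o k := by
    obtain ⟨m, hm⟩ := hp1
    have h1 := c.lv_par_iter p.1.1 m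
    rw [hm, lv_aa, hlvx] at h1
    have hm2 : m = 2*k := by omega
    rw [← hm2]; exact hm
  have hTxy : c.T.Adj p.1.1 q.1.1 := ((adj_iff c).mp hadj).2.1
  have hlvy : c.lv q.1.1 = L0 c o + k + 1 := by
    rw [q.2, hq2, (c.par'_spec _).2, lv'_aa']
  -- the meet index
  set P : ℕ → Prop := fun i => c.par^[i] o.1.1 = c.par^[k+i] p.1.1 with hP
  have hPd : DecidablePred P := fun _ => Classical.dec _
  have hex : ∃ i, P i := ⟨k, by
    show c.par^[k] o.1.1 = c.par^[k+k] p.1.1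
    rw [show k + k = 2*k by ring, h2k]; rfl⟩
  set i := Nat.find hex with hidef
  have hPi : P i := Nat.find_spec hex
  have hik : i ≤ k := Nat.find_min' hex (by
    show c.par^[k] o.1.1 = c.par^[k+k] p.1.1
    rw [show k + k = 2*k by ring, h2k]; rfl)
  have hmin : ∀ m, m < i → ¬ P m := fun m hm => Nat.find_min hex hm
  set N := 2*i + k with hN
  -- the ray
  set f : ℕ → DV c := fun n =>
    if h1 : n ≤ i then
      ⟨(c.par^[n] o.1.1, c.chd'^[n] o.1.2), by
        rw [c.lv_par_iter, c.lv'_chd'_iter, o.2]⟩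
    else if h2 : n ≤ N then
      ⟨(c.par^[N-n] p.1.1, c.par'^[n-i] (c.chd'^[i] o.1.2)), by
        dsimp only
        have e1 := c.lv_par_iter p.1.1 (N-n)
        have e2 := c.lv'_par'_iter (c.chd'^[i] o.1.2) (n-i)
        have e3 := c.lv'_chd'_iter o.1.2 i
        have e4 := o.2
        omega⟩
    else
      ⟨(c.chd^[n-(N+1)] q.1.1, c.par'^[n-i] (c.chd'^[i] o.1.2)), by
        dsimp only
        have e1 := c.lv_chd_iter q.1.1 (n-(N+1))
        have e2 := c.lv'_par'_iter (c.chd'^[i] o.1.2) (n-i)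
        have e3 := c.lv'_chd'_iter o.1.2 i
        have e4 := o.2
        omega⟩
    with hf
  have hfa : ∀ n, n ≤ i →
      (f n).1.1 = c.par^[n] o.1.1 ∧ (f n).1.2 = c.chd'^[n] o.1.2 := by
    intro n h
    simp only [hf, dif_pos h]
    exact ⟨trivial, trivial⟩
  have hfb : ∀ n, i < n → n ≤ N →
      (f n).1.1 = c.par^[N-n] p.1.1 ∧ (f n).1.2 = c.par'^[n-i] (c.chd'^[i] o.1.2) := by
    intro n h h2
    simp only [hf, dif_neg (by omega : ¬ n ≤ i), dif_pos h2]
    exact ⟨trivial, trivial⟩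
  have hfc : ∀ n, N < n →
      (f n).1.1 = c.chd^[n-(N+1)] q.1.1 ∧
        (f n).1.2 = c.par'^[n-i] (c.chd'^[i] o.1.2) := by
    intro n h
    simp only [hf, dif_neg (by omega : ¬ n ≤ i), dif_neg (by omega : ¬ n ≤ N)]
    exact ⟨trivial, trivial⟩
  have hlvl : ∀ n, lvl c (f n) = if n ≤ i then L0 c o - n else L0 c o + n - 2*i := by
    intro n
    by_cases h : n ≤ i
    · rw [if_pos h]
      show c.lv (f n).1.1 = _
      rw [(hfa n h).1, c.lv_par_iter, hL]
    · rw [if_neg h]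
      show c.lv (f n).1.1 = _
      by_cases h2 : n ≤ N
      · rw [(hfb n (by omega) h2).1, c.lv_par_iter, hlvx]
        omega
      · rw [(hfc n (by omega)).1, c.lv_chd_iter, hlvy]
        omega
  -- the key identified vertices
  have hfN : f N = p := by
    obtain ⟨e1, e2⟩ := hfb N (by omega) le_rfl
    apply Subtype.ext
    apply Prod.ext
    · rw [e1, Nat.sub_self, Function.iterate_zero_apply]
    · rw [e2, show N - i = k + i by omega, Function.iterate_add_apply,
        c.par'_chd'_iter]
      exact hp2.symm
  have hfN1 : f (N+1) = q := by
    obtain ⟨e1, e2⟩ := hfc (N+1) (by omega)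
    apply Subtype.ext
    apply Prod.ext
    · rw [e1, Nat.sub_self, Function.iterate_zero_apply]
    · rw [e2, show N + 1 - i = 1 + (k + i) by omega, Function.iterate_add_apply,
        Function.iterate_add_apply, c.par'_chd'_iter, Function.iterate_one]
      exact hq2.symm
  -- adjacency
  have hstep : ∀ n, (Gr c).Adj (f n) (f (n + 1)) := by
    intro n
    by_cases hn1 : n + 1 ≤ i
    · obtain ⟨a1, a2⟩ := hfa n (by omega)
      obtain ⟨b1, b2⟩ := hfa (n+1) hn1
      apply adj_of_comp
      · rw [a1, b1, Function.iterate_succ_apply']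
        exact (c.par_spec _).1
      · rw [a2, b2, Function.iterate_succ_apply']
        exact (c.chd'_spec _).1
    · by_cases hn2 : n + 1 ≤ N
      · by_cases hn3 : n ≤ i
        · -- n = i
          have hni : n = i := by omega
          obtain ⟨a1, a2⟩ := hfa n hn3
          obtain ⟨b1, b2⟩ := hfb (n+1) (by omega) hn2
          apply adj_of_comp
          · rw [a1, b1, hni, hPi, show k + i = (N - (i+1)) + 1 by omega,
              Function.iterate_succ_apply']
            exact ((c.par_spec _).1).symm
          · rw [a2, b2, hni, show i + 1 - i = 1 by omega, Function.iterate_one]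
            exact (c.par'_spec _).1
        · obtain ⟨a1, a2⟩ := hfb n (by omega) (by omega)
          obtain ⟨b1, b2⟩ := hfb (n+1) (by omega) hn2
          apply adj_of_comp
          · rw [a1, b1, show N - n = (N - (n+1)) + 1 by omega,
              Function.iterate_succ_apply']
            exact ((c.par_spec _).1).symm
          · rw [a2, b2, show n + 1 - i = (n - i) + 1 by omega,
              Function.iterate_succ_apply']
            exact (c.par'_spec _).1
      · by_cases hn3 : n ≤ N
        · -- n = N
          have hnN : n = N := by omega
          rw [hnN, hfN, hfN1]
          exact hadj
        · obtain ⟨a1, a2⟩ := hfc n (by omega)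
          obtain ⟨b1, b2⟩ := hfc (n+1) (by omega)
          apply adj_of_comp
          · rw [a1, b1, show n + 1 - (N+1) = (n - (N+1)) + 1 by omega,
              Function.iterate_succ_apply']
            exact (c.chd_spec _).1
          · rw [a2, b2, show n + 1 - i = (n - i) + 1 by omega,
              Function.iterate_succ_apply']
            exact (c.par'_spec _).1
  -- injectivity
  have hinj : Function.Injective f := by
    intro m n hmn
    have hl := congrArg (lvl c) hmn
    rw [hlvl m, hlvl n] at hl
    by_cases hm : m ≤ i <;> by_cases hn : n ≤ i
    · rw [if_pos hm, if_pos hn] at hl; omega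
    · rw [if_pos hm, if_neg hn] at hl
      exfalso
      have hmn2 : (m:ℤ) + n = 2*i := by omega
      have hmlt : m < i := by omega
      have hc := congrArg (fun z : DV c => z.1.1) hmn
      rw [(hfa m hm).1, (hfb n (by omega) (by omega)).1,
        show N - n = k + m by omega] at hc
      exact hmin m hmlt hc
    · rw [if_neg hm, if_pos hn] at hl
      exfalso
      have hmn2 : (m:ℤ) + n = 2*i := by omega
      have hnlt : n < i := by omega
      have hc := congrArg (fun z : DV c => z.1.1) hmn
      rw [(hfa n hn).1, (hfb m (by omega) (by omega)).1,
        show N - m = k + n by omega] at hc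
      exact hmin n hnlt hc.symm
    · rw [if_neg hm, if_neg hn] at hl; omega
  refine ⟨f, N, ⟨hinj, hstep⟩, ?_, hfN, hfN1, ?_, ?_, ?_⟩
  · apply Subtype.ext
    apply Prod.ext
    · rw [(hfa 0 (by omega)).1, Function.iterate_zero_apply]
    · rw [(hfa 0 (by omega)).2, Function.iterate_zero_apply]
  · intro n h
    rw [hlvl n] at h
    by_cases hn : n ≤ i
    · rw [if_pos hn] at h; omega
    · rw [if_neg hn] at h; omega
  · intro n h
    rw [hlvl n] at h
    by_cases hn : n ≤ i
    · rw [if_pos hn] at h; omega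
    · rw [if_neg hn] at h; omega
  · intro n h
    rw [hlvl n] at h
    by_cases hn : n ≤ i
    · rw [if_pos hn] at h; omega
    · rw [if_neg hn] at h; omega

lemma lvl_p_SA {p : DV c} (hp1 : p.1.1 = aa c o k) : lvl c p = L0 c o - k := by
  rw [lvl, hp1, lv_aa]

lemma main (hk : 1 ≤ k) :
    ∃ C : Set (Sym2 (DV c)),
      C.Finite ∧ C ⊆ (Gr c).edgeSet ∧ SepInf (Gr c) o C ∧
      (∀ Q ⊂ C, ¬ SepInf (Gr c) o Q) ∧
      ∃ A B : Set (Sym2 (DV c)),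
        A ∪ B = C ∧ Disjoint A B ∧ A.Nonempty ∧ B.Nonempty ∧
        ∀ e₁ ∈ A, ∀ e₂ ∈ B, ∀ x₁ ∈ e₁, ∀ x₂ ∈ e₂, k ≤ (Gr c).dist x₁ x₂ := by
  classical
  refine ⟨SA c o k ∪ SB c o k, C_finite c o k, C_subset_edgeSet c o k, ?_, ?_,
    SA c o k, SB c o k, rfl, SAB_disjoint c o k hk,
    SA_nonempty c o k hk, SB_nonempty c o k hk, ?_⟩
  · -- SepInf
    rintro f ⟨hinj, hstep⟩ hf0
    have hex : ∃ n, f n ∉ FF c o k := by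
      by_contra h
      push_neg at h
      have hsub : Set.range f ⊆ FF c o k := Set.range_subset_iff.mpr h
      exact Set.infinite_range_of_injective hinj ((FF_finite c o k).subset hsub)
    have hN0 : Nat.find hex ≠ 0 := by
      intro h0
      have := Nat.find_spec hex
      rw [h0, hf0] at this
      exact this (o_mem_FF c o k)
    obtain ⟨n, hn⟩ : ∃ n, Nat.find hex = n + 1 :=
      ⟨Nat.find hex - 1, by omega⟩
    have h1 : f n ∈ FF c o k := by
      by_contra h2
      have := Nat.find_min' hex h2
      omega
    have h2 : f (n + 1) ∉ FF c o k := by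
      rw [← hn]; exact Nat.find_spec hex
    exact ⟨n, exit_mem c o k h1 h2 (hstep n)⟩
  · -- minimality
    rintro Q hQ hSep
    obtain ⟨e, heC, heQ⟩ := Set.exists_of_ssubset hQ
    rcases heC with heA | heB
    · obtain ⟨p, q, he, hadj, hp1, hp2, hq1⟩ := heA
      obtain ⟨f, N, hray, hf0, hfN, hfN1, hA1, hA2, hB⟩ :=
        rayA c o k hk hadj hp1 hp2 hq1
      obtain ⟨n, hn⟩ := hSep f hray hf0
      by_cases hnN : n = N
      · subst hnN
        rw [hfN, hfN1, ← he] at hn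
        exact heQ hn
      · have hnC : s(f n, f (n+1)) ∈ SA c o k ∪ SB c o k := hQ.subset hn
        rcases hnC with h | h
        · obtain ⟨p', q', he', hl1, hl2⟩ := SA_lvl c o k h
          rcases Sym2.eq_iff.mp he' with ⟨h1, h2⟩ | ⟨h1, h2⟩
          · exact hnN (hA1 n (by rw [h1, hl1]))
          · have e1 : n = N + 1 := hA2 n (by rw [h1, hl2])
            have e2 : n + 1 = N := hA1 (n+1) (by rw [h2, hl1])
            omega
        · obtain ⟨p', q', he', hl1, hl2⟩ := SB_lvl c o k h
          rcases Sym2.eq_iff.mp he' with ⟨h1, h2⟩ | ⟨h1, h2⟩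
          · exact hB (n+1) (by rw [h2, hl2])
          · exact hB n (by rw [h1, hl2])
    · obtain ⟨p, q, he, hadj, hp2, hp1, hq2⟩ := heB
      obtain ⟨f, N, hray, hf0, hfN, hfN1, hB1, hB2, hA⟩ :=
        rayB c o k hk hadj hp2 hp1 hq2
      obtain ⟨n, hn⟩ := hSep f hray hf0
      by_cases hnN : n = N
      · subst hnN
        rw [hfN, hfN1, ← he] at hn
        exact heQ hn
      · have hnC : s(f n, f (n+1)) ∈ SA c o k ∪ SB c o k := hQ.subset hn
        rcases hnC with h | h
        · obtain ⟨p', q', he', hl1, hl2⟩ := SA_lvl c o k h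
          rcases Sym2.eq_iff.mp he' with ⟨h1, h2⟩ | ⟨h1, h2⟩
          · exact hA (n+1) (by rw [h2, hl2])
          · exact hA n (by rw [h1, hl2])
        · obtain ⟨p', q', he', hl1, hl2⟩ := SB_lvl c o k h
          rcases Sym2.eq_iff.mp he' with ⟨h1, h2⟩ | ⟨h1, h2⟩
          · exact hnN (hB1 n (by rw [h1, hl1]))
          · have e1 : n = N + 1 := hB2 n (by rw [h1, hl2])
            have e2 : n + 1 = N := hB1 (n+1) (by rw [h2, hl1])
            omega
  · -- the distance bound
    intro e₁ he₁ e₂ he₂ x₁ hx₁ x₂ hx₂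
    obtain ⟨p, q, he, hadj, hp1, hp2, hq1⟩ := he₁
    obtain ⟨f, N, hray, hf0, hfN, hfN1, -, -, -⟩ := rayA c o k hk hadj hp1 hp2 hq1
    obtain ⟨p', q', he', hadj', hp2', hp1', hq2'⟩ := he₂
    obtain ⟨f', N', hray', hf0', hfN', hfN1', -, -, -⟩ :=
      rayB c o k hk hadj' hp2' hp1' hq2'
    have hreach1 : (Gr c).Reachable o x₁ := by
      rw [he] at hx₁
      rcases Sym2.mem_iff.mp hx₁ with h | h
      · rw [h, ← hfN, ← hf0]; exact reach_of_chain c hray.2 N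
      · rw [h, ← hfN1, ← hf0]; exact reach_of_chain c hray.2 (N+1)
    have hreach2 : (Gr c).Reachable o x₂ := by
      rw [he'] at hx₂
      rcases Sym2.mem_iff.mp hx₂ with h | h
      · rw [h, ← hfN', ← hf0']; exact reach_of_chain c hray'.2 N'
      · rw [h, ← hfN1', ← hf0']; exact reach_of_chain c hray'.2 (N'+1)
    have hlp : lvl c p = L0 c o - k := by rw [lvl, hp1, lv_aa]
    have hlq : lvl c q = L0 c o - k - 1 := by rw [lvl, hq1, (c.par_spec _).2, lv_aa]
    have hlvl1 : lvl c x₁ ≤ L0 c o - k := by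
      rw [he] at hx₁
      rcases Sym2.mem_iff.mp hx₁ with h | h <;> rw [h] <;> omega
    have hlp' : lvl c p' = L0 c o + k := by rw [← lvl_snd, hp2', lv'_aa']
    have hlq' : lvl c q' = L0 c o + k + 1 := by
      rw [← lvl_snd, hq2', (c.par'_spec _).2, lv'_aa']
    have hlvl2 : L0 c o + k ≤ lvl c x₂ := by
      rw [he'] at hx₂
      rcases Sym2.mem_iff.mp hx₂ with h | h <;> rw [h] <;> omega
    have hdist := lvl_diff_le_dist c (hreach1.symm.trans hreach2)
    have habs : (2*k : ℤ) ≤ |lvl c x₁ - lvl c x₂| := by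
      rw [abs_sub_comm]
      calc (2*k : ℤ) ≤ lvl c x₂ - lvl c x₁ := by omega
        _ ≤ |lvl c x₂ - lvl c x₁| := le_abs_self _
    have : (k : ℤ) ≤ ((Gr c).dist x₁ x₂ : ℤ) := by omega
    exact_mod_cast this

end Rays

end DLAux

/-- in `DL(2,2)` (the horocyclic product of two 3-regular trees with
opposite level orientations), for every `k ≥ 1` there is a finite minimal edge cutset
`C_k` separating a fixed vertex `o` from infinity which splits into two nonempty parts
`A_k`, `B_k` at distance at least `k`; hence `C_{DL(2,2)} = ∞`. -/
theorem stmt8 {V V' : Type*} (T : SimpleGraph V) (T' : SimpleGraph V')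
    (ℓ : V → ℤ) (ℓ' : V' → ℤ)
    (hT : T.Connected) (hTac : T.IsAcyclic)
    (hT' : T'.Connected) (hT'ac : T'.IsAcyclic)
    (hlev : ∀ u v : V, T.Adj u v → ℓ v = ℓ u + 1 ∨ ℓ v = ℓ u - 1)
    (hlev' : ∀ u v : V', T'.Adj u v → ℓ' v = ℓ' u + 1 ∨ ℓ' v = ℓ' u - 1)
    (hdown : ∀ v : V, {w : V | T.Adj v w ∧ ℓ w = ℓ v + 1}.ncard = 2)
    (hup : ∀ v : V, {w : V | T.Adj v w ∧ ℓ w = ℓ v - 1}.ncard = 1)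
    (hdown' : ∀ v : V', {w : V' | T'.Adj v w ∧ ℓ' w = ℓ' v - 1}.ncard = 2)
    (hup' : ∀ v : V', {w : V' | T'.Adj v w ∧ ℓ' w = ℓ' v + 1}.ncard = 1)
    (o : {p : V × V' // ℓ p.1 = ℓ' p.2}) :
    ∀ k : ℕ, 1 ≤ k →
      ∃ C : Set (Sym2 {p : V × V' // ℓ p.1 = ℓ' p.2}),
        C.Finite ∧ C ⊆ (DLGraph T T' ℓ ℓ').edgeSet ∧
        SepInf (DLGraph T T' ℓ ℓ') o C ∧
        (∀ Q ⊂ C, ¬ SepInf (DLGraph T T' ℓ ℓ') o Q) ∧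
        ∃ A B : Set (Sym2 {p : V × V' // ℓ p.1 = ℓ' p.2}),
          A ∪ B = C ∧ Disjoint A B ∧ A.Nonempty ∧ B.Nonempty ∧
          ∀ e₁ ∈ A, ∀ e₂ ∈ B, ∀ x₁ ∈ e₁, ∀ x₂ ∈ e₂,
            k ≤ (DLGraph T T' ℓ ℓ').dist x₁ x₂ := by
  intro k hk
  exact DLAux.main ⟨T, T', ℓ, ℓ', hlev, hlev', hdown, hup, hdown', hup'⟩ o k hk
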